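/- Under the standing assumptions (X Banach, Y Hilbert, A : X → Y bounded linear, R proper, lower semicontinuous, c₀-strongly convex, Ax = y solvable in dom(R), y₁, y₂, … i.i.d. Y-valued with E[y₁] = y and 0 < σ² < ∞), consider the dual gradient iterates with averaged data ȳ⁽ⁿ⁾, λ₀⁽ⁿ⁾ = 0, and 0 < γ < 2c₀/‖A‖². Let t_n be chosen by the discrepancy-type rule (the first integer t ≤ β₀n with ‖Ax_t⁽ⁿ⁾ − ȳ⁽ⁿ⁾‖ ≤ τ_n s_n/√n, and t_n = β₀n if no such t exists), where τ_n → ∞ and τ_n/√n → 0. Set φ(n) := στ_n/(2√n) and let Ω_n := {|s_n − σ| ≤ σ/2, ‖ȳ⁽ⁿ⁾ − y‖ ≤ τ_n √(c s_n²/(2n))} with c := 1/2 − γ‖A‖²/(4c₀). Then for every ε > 0 there is an integer n_ε such that t_n φ(n)² ≤ ε on Ω_n for all n ≥ n_ε. -/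

import Mathlib

open MeasureTheory ProbabilityTheory Filter Topology
open scoped RealInnerProductSpace ENNReal BigOperators

/-- The sample mean `ȳ⁽ⁿ⁾ = (1/n) ∑_{i<n} yᵢ` of the first `n` measurements. -/
noncomputable def sampleMean {Y Ω : Type*} [NormedAddCommGroup Y] [NormedSpace ℝ Y]
    (ys : ℕ → Ω → Y) (n : ℕ) (ω : Ω) : Y :=
  (n : ℝ)⁻¹ • ∑ i ∈ Finset.range n, ys i ω

/-- The square root `s_n` of the sample variance of the first `n` measurements. -/
noncomputable def sampleSD {Y Ω : Type*} [NormedAddCommGroup Y] [NormedSpace ℝ Y]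
    (ys : ℕ → Ω → Y) (n : ℕ) (ω : Ω) : ℝ :=
  Real.sqrt (((n : ℝ) - 1)⁻¹ * ∑ i ∈ Finset.range n, ‖ys i ω - sampleMean ys n ω‖ ^ 2)


private lemma young_aux (c₀ γ p q w : ℝ) (hc₀ : 0 < c₀) :
    4 * c₀ * (γ * (p * (q * w))) ≤ 4 * c₀ * (c₀ * w ^ 2) + γ ^ 2 * q ^ 2 * p ^ 2 := by
  nlinarith [sq_nonneg (2 * c₀ * w - γ * (q * p))]

set_option maxHeartbeats 4000000 in
/-- Lemma 3.9: under the statistical discrepancy principle (Rule 3.1) with `τ_n → ∞` and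
`τ_n/√n → 0`, for every `ε > 0` one has `t_n φ(n)² ≤ ε` on the event `Ω_n` for all
sufficiently large `n`, where `φ(n) = στ_n/(2√n)`. -/
theorem discrepancy_stopping_index_bound
    {X Y : Type*} [NormedAddCommGroup X] [NormedSpace ℝ X] [CompleteSpace X]
    [NormedAddCommGroup Y] [InnerProductSpace ℝ Y] [CompleteSpace Y]
    [MeasurableSpace Y] [BorelSpace Y]
    {Ω : Type*} [MeasurableSpace Ω] (μ : Measure Ω) [IsProbabilityMeasure μ]
    (A : X →L[ℝ] Y) (R : X → ℝ≥0∞) (c₀ : ℝ) (hc₀ : 0 < c₀)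
    (hproper : ∃ u : X, R u ≠ ⊤)
    (hlsc : LowerSemicontinuous R)
    (hsconv : ∀ u v : X, R u ≠ ⊤ → R v ≠ ⊤ → ∀ s : ℝ, 0 ≤ s → s ≤ 1 →
      R (s • u + (1 - s) • v) + ENNReal.ofReal (c₀ * s * (1 - s) * ‖u - v‖ ^ 2)
        ≤ ENNReal.ofReal s * R u + ENNReal.ofReal (1 - s) * R v)
    (y : Y) (xdag : X) (hxdag_sol : A xdag = y) (hxdag_dom : R xdag ≠ ⊤)
    (hxdag_min : ∀ z : X, A z = y → R xdag ≤ R z)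
    -- the i.i.d. data
    (ys : ℕ → Ω → Y) (σ2 : ℝ)
    (hmeas : ∀ i, Measurable (ys i))
    (hindep : iIndepFun ys μ)
    (hident : ∀ i, IdentDistrib (ys i) (ys 0) μ μ)
    (hint1 : Integrable (ys 0) μ)
    (hmean : ∫ ω, ys 0 ω ∂μ = y)
    (hint2 : Integrable (fun ω => ‖ys 0 ω - y‖ ^ 2) μ)
    (hσ2 : σ2 = ∫ ω, ‖ys 0 ω - y‖ ^ 2 ∂μ) (hσ2pos : 0 < σ2)
    -- the step size
    (γ : ℝ) (hγ0 : 0 < γ) (hγ : γ < 2 * c₀ / ‖A‖ ^ 2)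
    -- the dual gradient iterates with averaged data ȳ⁽ⁿ⁾
    (xs : ℕ → ℕ → Ω → X) (lams : ℕ → ℕ → Ω → Y)
    (hlams0 : ∀ n ω, lams n 0 ω = 0)
    (hmins : ∀ n t ω, R (xs n t ω) ≠ ⊤ ∧ ∀ z : X,
      ENNReal.ofReal ((R (xs n t ω)).toReal - ⟪lams n t ω, A (xs n t ω)⟫
        + ⟪lams n t ω, A z⟫) ≤ R z)
    (hupds : ∀ n t ω, lams n (t + 1) ω
      = lams n t ω - γ • (A (xs n t ω) - sampleMean ys n ω))
    -- the a posteriori stopping rule (statistical discrepancy principle)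
    (β₀ : ℝ) (hβ₀ : 0 < β₀)
    (τ : ℕ → ℝ) (hτ1 : ∀ n, 1 < τ n)
    (hτ_inf : Tendsto τ atTop atTop)
    (hτ_n : Tendsto (fun n : ℕ => τ n / Real.sqrt n) atTop (𝓝 0))
    (tn : ℕ → Ω → ℕ)
    (htn_le : ∀ n ω, tn n ω ≤ ⌊β₀ * (n : ℝ)⌋₊)
    (htn_disc : ∀ n ω,
      ‖A (xs n (tn n ω) ω) - sampleMean ys n ω‖ ≤ τ n * sampleSD ys n ω / Real.sqrt n
        ∨ tn n ω = ⌊β₀ * (n : ℝ)⌋₊)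
    (htn_first : ∀ n ω, ∀ t < tn n ω,
      ¬ ‖A (xs n t ω) - sampleMean ys n ω‖ ≤ τ n * sampleSD ys n ω / Real.sqrt n)
 :
    ∀ ε : ℝ, 0 < ε → ∃ N : ℕ, ∀ n : ℕ, N ≤ n → ∀ ω : Ω,
      (|sampleSD ys n ω - Real.sqrt σ2| ≤ Real.sqrt σ2 / 2
        ∧ ‖sampleMean ys n ω - y‖
            ≤ τ n * Real.sqrt ((1 / 2 - γ * ‖A‖ ^ 2 / (4 * c₀)) * (sampleSD ys n ω) ^ 2
                / (2 * n))) →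
      (tn n ω : ℝ) * (Real.sqrt σ2 * τ n / (2 * Real.sqrt n)) ^ 2 ≤ ε := by
  intro ε hε
  classical
  -- Ω is nonempty since μ is a probability measure
  have hΩ : Nonempty Ω := by
    by_contra hne
    rw [not_nonempty_iff] at hne
    have h1 : μ Set.univ = 1 := measure_univ
    rw [Set.univ_eq_empty_iff.mpr hne, measure_empty] at h1
    exact one_ne_zero h1.symm
  -- ‖A‖ > 0
  have hA2 : (0:ℝ) < ‖A‖ := by
    rcases eq_or_lt_of_le (norm_nonneg A) with h | h
    · exfalso
      rw [← h] at hγ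
      norm_num at hγ
      linarith
    · exact h
  set c : ℝ := 1 / 2 - γ * ‖A‖ ^ 2 / (4 * c₀) with hc_def
  have hc0 : 0 < c := by
    have h1 : γ * ‖A‖ ^ 2 < 2 * c₀ := (lt_div_iff₀ (by positivity)).1 hγ
    rw [hc_def, sub_pos, div_lt_iff₀ (by positivity)]
    nlinarith
  have hc12 : c ≤ 1 / 2 := by
    have h : 0 ≤ γ * ‖A‖ ^ 2 / (4 * c₀) := by positivity
    rw [hc_def]; linarith
  set D : ℝ := (R xdag).toReal with hD_def
  have hD0 : 0 ≤ D := ENNReal.toReal_nonneg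
  set σ : ℝ := Real.sqrt σ2 with hσ_def
  have hσ0 : 0 < σ := Real.sqrt_pos.2 hσ2pos
  clear_value c D σ
  -- basic optimality in real form
  have opt : ∀ n t ω (z : X), R z ≠ ⊤ →
      (R (xs n t ω)).toReal + ⟪lams n t ω, A z - A (xs n t ω)⟫ ≤ (R z).toReal := by
    intro n t ω z hz
    have h2 := (hmins n t ω).2 z
    rw [ENNReal.ofReal_le_iff_le_toReal hz] at h2
    rw [inner_sub_right]
    linarith
  -- strengthened optimality using strong convexity
  have sopt : ∀ n t ω (z : X), R z ≠ ⊤ →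
      (R (xs n t ω)).toReal + ⟪lams n t ω, A z - A (xs n t ω)⟫
        + c₀ * ‖z - xs n t ω‖ ^ 2 ≤ (R z).toReal := by
    intro n t ω z hz
    have hx : R (xs n t ω) ≠ ⊤ := (hmins n t ω).1
    have hQ0 : (0:ℝ) ≤ ‖z - xs n t ω‖ ^ 2 := by positivity
    refine le_of_forall_pos_le_add ?_
    intro η hη
    set Q : ℝ := ‖z - xs n t ω‖ ^ 2 with hQ_def
    set s : ℝ := min 1 (η / (c₀ * Q + 1)) with hs_def
    have hden : (0:ℝ) < c₀ * Q + 1 := add_pos_of_nonneg_of_pos (mul_nonneg hc₀.le hQ0) one_pos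
    have hs0 : 0 < s := lt_min one_pos (div_pos hη hden)
    have hs1 : s ≤ 1 := min_le_left _ _
    have hsQ : c₀ * s * Q ≤ η := by
      have h1 : s ≤ η / (c₀ * Q + 1) := min_le_right _ _
      rw [le_div_iff₀ hden] at h1
      nlinarith only [h1, hs0, hQ0, hc₀]
    have hw := hsconv z (xs n t ω) hz hx s hs0.le hs1
    have hfin : ENNReal.ofReal s * R z + ENNReal.ofReal (1 - s) * R (xs n t ω) ≠ ⊤ := by
      apply ENNReal.add_ne_top.2
      exact ⟨ENNReal.mul_ne_top ENNReal.ofReal_ne_top hz,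
        ENNReal.mul_ne_top ENNReal.ofReal_ne_top hx⟩
    have hwfin : R (s • z + (1 - s) • xs n t ω) ≠ ⊤ := by
      intro htop
      refine hfin (eq_top_iff.2 (le_trans ?_ hw))
      rw [htop]
      exact le_add_right le_rfl
    have h1 := opt n t ω (s • z + (1 - s) • xs n t ω) hwfin
    have hAw : A (s • z + (1 - s) • xs n t ω) - A (xs n t ω) = s • (A z - A (xs n t ω)) := by
      rw [map_add, A.map_smul, A.map_smul]
      module
    rw [hAw, real_inner_smul_right] at h1
    have h2 : (R (s • z + (1 - s) • xs n t ω)).toReal + c₀ * s * (1 - s) * Q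
        ≤ s * (R z).toReal + (1 - s) * (R (xs n t ω)).toReal := by
      have h3 := ENNReal.toReal_mono hfin hw
      rw [ENNReal.toReal_add hwfin ENNReal.ofReal_ne_top,
        ENNReal.toReal_ofReal (mul_nonneg (mul_nonneg (mul_nonneg hc₀.le hs0.le) (by linarith)) hQ0),
        ENNReal.toReal_add (ENNReal.mul_ne_top ENNReal.ofReal_ne_top hz)
          (ENNReal.mul_ne_top ENNReal.ofReal_ne_top hx),
        ENNReal.toReal_mul, ENNReal.toReal_mul, ENNReal.toReal_ofReal hs0.le,
        ENNReal.toReal_ofReal (by linarith : (0:ℝ) ≤ 1 - s)] at h3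
      exact h3
    have hdiv : ⟪lams n t ω, A z - A (xs n t ω)⟫ + c₀ * (1 - s) * Q
        ≤ (R z).toReal - (R (xs n t ω)).toReal := by
      have h3 : s * (⟪lams n t ω, A z - A (xs n t ω)⟫ + c₀ * (1 - s) * Q)
          ≤ s * ((R z).toReal - (R (xs n t ω)).toReal) := by nlinarith only [h1, h2]
      exact le_of_mul_le_mul_left h3 hs0
    have hsplit : c₀ * Q = c₀ * (1 - s) * Q + c₀ * s * Q := by ring
    linarith only [hdiv, hsplit, hsQ]
  -- descent of the dual objective
  have ddescent : ∀ n ω t,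
      ⟪lams n (t+1) ω, A (xs n (t+1) ω) - sampleMean ys n ω⟫ - (R (xs n (t+1) ω)).toReal
        ≤ ⟪lams n t ω, A (xs n t ω) - sampleMean ys n ω⟫ - (R (xs n t ω)).toReal
          - γ * (1/2 + c) * ‖A (xs n t ω) - sampleMean ys n ω‖ ^ 2 := by
    intro n ω t
    have hup := hupds n t ω
    have h1 := sopt n t ω (xs n (t+1) ω) (hmins n (t+1) ω).1
    -- notation
    set b := sampleMean ys n ω
    set x1 := xs n t ω
    set x2 := xs n (t+1) ω
    set l1 := lams n t ω
    set l2 := lams n (t+1) ω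
    clear_value b x1 x2 l1 l2
    have e1 : (⟪l2, A x2 - b⟫ : ℝ) = ⟪l1, A x2 - b⟫ - γ * ⟪A x1 - b, A x2 - b⟫ := by
      rw [hup, inner_sub_left, real_inner_smul_left]
    have e2 : (⟪l1, A x2 - b⟫ : ℝ) = ⟪l1, A x1 - b⟫ + ⟪l1, A x2 - A x1⟫ := by
      rw [← inner_add_right]
      congr 1
      abel
    have e3 : γ * (⟪A x1 - b, A x2 - b⟫ : ℝ)
        = γ * ‖A x1 - b‖ ^ 2 - γ * ⟪A x1 - b, A (x1 - x2)⟫ := by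
      have hx2b : A x2 - b = (A x1 - b) - A (x1 - x2) := by
        rw [map_sub]; abel
      rw [hx2b, inner_sub_right, real_inner_self_eq_norm_sq]
      ring
    have h5 : (⟪A x1 - b, A (x1 - x2)⟫ : ℝ) ≤ ‖A x1 - b‖ * (‖A‖ * ‖x1 - x2‖) :=
      le_trans (real_inner_le_norm _ _)
        (mul_le_mul_of_nonneg_left (A.le_opNorm _) (norm_nonneg _))
    have hyoung : γ * (‖A x1 - b‖ * (‖A‖ * ‖x1 - x2‖))
        ≤ c₀ * ‖x1 - x2‖ ^ 2 + γ ^ 2 * ‖A‖ ^ 2 * ‖A x1 - b‖ ^ 2 / (4 * c₀) := by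
      have key : 4 * c₀ * (γ * (‖A x1 - b‖ * (‖A‖ * ‖x1 - x2‖)))
          ≤ 4 * c₀ * (c₀ * ‖x1 - x2‖ ^ 2) + γ ^ 2 * ‖A‖ ^ 2 * ‖A x1 - b‖ ^ 2 := by
        exact young_aux c₀ γ ‖A x1 - b‖ ‖A‖ ‖x1 - x2‖ hc₀
      have h6 : γ * (‖A x1 - b‖ * (‖A‖ * ‖x1 - x2‖))
          ≤ (4 * c₀ * (c₀ * ‖x1 - x2‖ ^ 2) + γ ^ 2 * ‖A‖ ^ 2 * ‖A x1 - b‖ ^ 2) / (4 * c₀) := by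
        rw [le_div_iff₀ (by positivity : (0:ℝ) < 4 * c₀)]
        linarith only [key]
      have h7 : (4 * c₀ * (c₀ * ‖x1 - x2‖ ^ 2) + γ ^ 2 * ‖A‖ ^ 2 * ‖A x1 - b‖ ^ 2) / (4 * c₀)
          = c₀ * ‖x1 - x2‖ ^ 2 + γ ^ 2 * ‖A‖ ^ 2 * ‖A x1 - b‖ ^ 2 / (4 * c₀) := by
        have hc4 : (4:ℝ) * c₀ ≠ 0 := by positivity
        field_simp
      rw [h7] at h6
      exact h6
    have hcc : γ * (1/2 + c) * ‖A x1 - b‖ ^ 2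
        = γ * ‖A x1 - b‖ ^ 2 - γ ^ 2 * ‖A‖ ^ 2 * ‖A x1 - b‖ ^ 2 / (4 * c₀) := by
      rw [hc_def]
      ring
    have hnorm12 : ‖x2 - x1‖ ^ 2 = ‖x1 - x2‖ ^ 2 := by rw [norm_sub_rev]
    have hγ5 : γ * ⟪A x1 - b, A (x1 - x2)⟫ ≤ γ * (‖A x1 - b‖ * (‖A‖ * ‖x1 - x2‖)) :=
      mul_le_mul_of_nonneg_left h5 hγ0.le
    have hnorm12' : c₀ * ‖x2 - x1‖ ^ 2 = c₀ * ‖x1 - x2‖ ^ 2 := by rw [hnorm12]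
    -- h1 : Rt1 + ⟪l1, A x2 - A x1⟫ + c₀ ‖x2 - x1‖² ≤ Rt2
    linarith only [h1, e1, e2, e3, hγ5, hyoung, hcc, hnorm12']
  -- lower bound for the exact-data dual values
  have hlow : ∀ n t ω, -D ≤ ⟪lams n t ω, A (xs n t ω) - y⟫ - (R (xs n t ω)).toReal := by
    intro n t ω
    have h1 := opt n t ω xdag hxdag_dom
    rw [hxdag_sol] at h1
    have h2 : (⟪lams n t ω, y - A (xs n t ω)⟫ : ℝ) = -⟪lams n t ω, A (xs n t ω) - y⟫ := by
      rw [← inner_neg_right]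
      congr 1
      abel
    rw [h2, ← hD_def] at h1
    linarith only [h1, ENNReal.toReal_nonneg (a := R (xs n t ω))]
  set S : Set ℝ := Set.range (fun p : ℕ × ℕ × Ω =>
    ⟪lams p.1 p.2.1 p.2.2, A (xs p.1 p.2.1 p.2.2) - y⟫ - (R (xs p.1 p.2.1 p.2.2)).toReal)
    with hS_def
  have hSne : S.Nonempty := ⟨_, ⟨(0, 0, Classical.arbitrary Ω), rfl⟩⟩
  have hSbdd : BddBelow S := by
    refine ⟨-D, ?_⟩
    rintro v ⟨⟨n, t, ω⟩, rfl⟩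
    exact hlow n t ω
  set lstar : ℝ := sInf S with hlstar_def
  have hmem : ∀ n t ω, lstar ≤ ⟪lams n t ω, A (xs n t ω) - y⟫ - (R (xs n t ω)).toReal :=
    fun n t ω => csInf_le hSbdd ⟨(n, t, ω), rfl⟩
  set ε₃ : ℝ := γ * ε / 16 with hε₃_def
  have hε₃0 : 0 < ε₃ := div_pos (mul_pos hγ0 hε) (by norm_num)
  obtain ⟨v, hvS, hvlt⟩ := Real.lt_sInf_add_pos hSne hε₃0
  obtain ⟨⟨nw, tw, ωw⟩, hveq⟩ := hvS
  have hHwlt : ⟪lams nw tw ωw, A (xs nw tw ωw) - y⟫ - (R (xs nw tw ωw)).toReal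
      < lstar + ε₃ := by
    have h1 : ⟪lams nw tw ωw, A (xs nw tw ωw) - y⟫ - (R (xs nw tw ωw)).toReal = v := hveq
    rw [h1]
    exact hvlt
  clear_value S lstar ε₃
  set K : ℝ := ‖lams nw tw ωw‖ with hK_def
  have hK0 : 0 ≤ K := norm_nonneg _
  clear_value K
  have hγne : γ ≠ 0 := ne_of_gt hγ0
  have hεne : ε ≠ 0 := ne_of_gt hε
  set t₁ : ℕ := Nat.ceil ((16 / (γ * ε)) * (K ^ 2 / (2 * γ) + 2 * D)) + 1 with ht₁_def
  have ht₁pos : 0 < t₁ := Nat.succ_pos _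
  have ht₁R : (0:ℝ) < (t₁:ℝ) := by exact_mod_cast ht₁pos
  have ht₁ge : (16 / (γ * ε)) * (K ^ 2 / (2 * γ) + 2 * D) ≤ (t₁ : ℝ) := by
    have h1 := Nat.le_ceil ((16 / (γ * ε)) * (K ^ 2 / (2 * γ) + 2 * D))
    have h2 : ((Nat.ceil ((16 / (γ * ε)) * (K ^ 2 / (2 * γ) + 2 * D)) : ℕ) : ℝ) ≤ (t₁ : ℝ) := by
      exact_mod_cast Nat.le_succ _
    linarith only [h1, h2]
  have ht₁main : (4 / γ) * (K ^ 2 / (2 * γ) + 2 * D) / (t₁:ℝ) ≤ ε / 4 := by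
    rw [div_le_iff₀ ht₁R]
    have h3 : (4 / γ) * (K ^ 2 / (2 * γ) + 2 * D)
        = (ε / 4) * ((16 / (γ * ε)) * (K ^ 2 / (2 * γ) + 2 * D)) := by
      field_simp
      ring
    rw [h3]
    exact mul_le_mul_of_nonneg_left ht₁ge (by linarith only [hε])
  set ρ : ℝ := Real.sqrt ((D + (t₁:ℝ) * γ) * (4 / γ)) with hρ_def
  have hρ0 : 0 ≤ ρ := Real.sqrt_nonneg _
  set Λ₁ : ℝ := γ * (t₁:ℝ) * ρ with hΛ_def
  have hΛ0 : 0 ≤ Λ₁ :=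
    mul_nonneg (mul_nonneg hγ0.le (Nat.cast_nonneg t₁)) hρ0
  clear_value ρ Λ₁
  set η₀ : ℝ := min 1 (ε * γ / (16 * (2 * γ + Λ₁ + K))) with hη₀_def
  have hden2 : (0:ℝ) < 16 * (2 * γ + Λ₁ + K) := by
    have h1 : 0 < 2 * γ + Λ₁ + K := by linarith only [hγ0, hΛ0, hK0]
    linarith only [h1]
  have hη₀0 : 0 < η₀ := lt_min one_pos (div_pos (mul_pos hε hγ0) hden2)
  have hη₀1 : η₀ ≤ 1 := min_le_left _ _
  have hη₀2 : η₀ ≤ ε * γ / (16 * (2 * γ + Λ₁ + K)) := min_le_right _ _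
  clear_value η₀
  -- eventual smallness conditions
  have hev1 : ∀ᶠ n in atTop, σ * (τ n / Real.sqrt n) < η₀ := by
    have h1 : Tendsto (fun n : ℕ => σ * (τ n / Real.sqrt n)) atTop (𝓝 0) := by
      simpa using hτ_n.const_mul σ
    exact h1.eventually_lt_const hη₀0
  have hev2 : ∀ᶠ n in atTop, (t₁:ℝ) * ((3/2 * σ)^2 * (τ n / Real.sqrt n)^2) < ε/4 := by
    have h2 : Tendsto (fun n : ℕ =>
        (t₁:ℝ) * ((3/2 * σ)^2 * ((τ n / Real.sqrt n) * (τ n / Real.sqrt n))))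
        atTop (𝓝 ((t₁:ℝ) * ((3/2 * σ)^2 * (0 * 0)))) :=
      ((hτ_n.mul hτ_n).const_mul ((3/2 * σ)^2)).const_mul (t₁:ℝ)
    rw [mul_zero, mul_zero, mul_zero] at h2
    have h3 : Tendsto (fun n : ℕ => (t₁:ℝ) * ((3/2 * σ)^2 * (τ n / Real.sqrt n)^2))
        atTop (𝓝 0) := by
      simpa only [pow_two] using h2
    exact h3.eventually_lt_const (by linarith only [hε])
  obtain ⟨N₀, hN₀⟩ := Filter.eventually_atTop.mp (hev1.and hev2)
  refine ⟨max N₀ 1, fun n hn ω hevent => ?_⟩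
  obtain ⟨hs_ev, hE_ev⟩ := hevent
  have hnN₀ : N₀ ≤ n := le_trans (le_max_left _ _) hn
  have hn1 : 1 ≤ n := le_trans (le_max_right _ _) hn
  obtain ⟨hu1, hu2⟩ := hN₀ n hnN₀
  -- instantiate the per-trajectory hypotheses so that `set` can fold them
  have hup := fun t => hupds n t ω
  have hfirst := htn_first n ω
  have hlam0 := hlams0 n ω
  have hdes0 := fun t => ddescent n ω t
  -- local abbreviations
  set s : ℝ := sampleSD ys n ω with hs_def
  set u : ℝ := τ n / Real.sqrt n with hu_def
  set b : Y := sampleMean ys n ω with hb_def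
  set E : ℝ := ‖b - y‖ with hE_def2
  set T : ℕ := tn n ω with hT_def
  clear_value T
  -- basic positivity facts
  have hnR : (0:ℝ) < (n:ℝ) := by exact_mod_cast hn1
  have hsqn : (0:ℝ) < Real.sqrt n := Real.sqrt_pos.2 hnR
  have hs0 : 0 ≤ s := Real.sqrt_nonneg _
  have hτpos : 0 < τ n := lt_trans one_pos (hτ1 n)
  have hu0 : 0 < u := div_pos hτpos hsqn
  have husq : u ^ 2 = (τ n) ^ 2 / (n:ℝ) := by
    rw [hu_def, div_pow, Real.sq_sqrt hnR.le]
  obtain ⟨hsl', hsu'⟩ := abs_le.1 hs_ev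
  have hsl : σ / 2 ≤ s := by linarith only [hsl', hσ0]
  have hsu : s ≤ 3 / 2 * σ := by linarith only [hsu', hσ0]
  set δ : ℝ := s * u with hδ_def
  have hδ0 : 0 ≤ δ := mul_nonneg hs0 hu0.le
  have hδsq : δ ^ 2 = s ^ 2 * u ^ 2 := by rw [hδ_def, mul_pow]
  clear_value δ
  have hthr : τ n * s / Real.sqrt n = δ := by rw [hδ_def, hu_def]; ring
  have hE0 : 0 ≤ E := norm_nonneg _
  clear_value s u E
  have hEδ2 : E ^ 2 ≤ c / 2 * δ ^ 2 := by
    have harg : 0 ≤ c * s ^ 2 / (2 * (n:ℝ)) := by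
      apply div_nonneg _ (by linarith only [hnR])
      exact mul_nonneg hc0.le (sq_nonneg s)
    have h2 : E ^ 2 ≤ (τ n * Real.sqrt (c * s ^ 2 / (2 * (n:ℝ)))) ^ 2 :=
      pow_le_pow_left₀ hE0 hE_ev 2
    rw [mul_pow, Real.sq_sqrt harg] at h2
    calc E ^ 2 ≤ (τ n) ^ 2 * (c * s ^ 2 / (2 * (n:ℝ))) := h2
    _ = c / 2 * (s ^ 2 * ((τ n) ^ 2 / (n:ℝ))) := by ring
    _ = c / 2 * δ ^ 2 := by rw [hδsq, husq]
  have hEδ : E ≤ δ / 2 := by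
    have h1 : E ^ 2 ≤ (δ / 2) ^ 2 := by nlinarith only [hEδ2, hc12, sq_nonneg δ]
    have h2 := Real.sqrt_le_sqrt h1
    rwa [Real.sqrt_sq hE0, Real.sqrt_sq (by linarith only [hδ0] : (0:ℝ) ≤ δ / 2)] at h2
  have hδu : δ ≤ 3 / 2 * σ * u := by
    rw [hδ_def]; exact mul_le_mul_of_nonneg_right hsu hu0.le
  have hEσu : E ≤ σ * u := by nlinarith only [hEδ, hδu, hu0, hσ0]
  have hE1 : E ≤ 1 := le_trans hEσu (le_trans hu1.le hη₀1)
  have hEη : E ≤ η₀ := le_trans hEσu hu1.le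
  -- the trajectory quantities
  set Gf : ℕ → ℝ := fun t => ⟪lams n t ω, A (xs n t ω) - y⟫ - (R (xs n t ω)).toReal
    with hGf_def
  set rn : ℕ → Y := fun t => A (xs n t ω) - b with hrn_def
  have hrn : ∀ t, rn t = A (xs n t ω) - b := fun t => rfl
  have hGft : ∀ t, Gf t = ⟪lams n t ω, A (xs n t ω) - y⟫ - (R (xs n t ω)).toReal :=
    fun t => rfl
  clear_value Gf rn
  -- discrepancy failure before the stopping time
  have hdisc : ∀ t, t < T → δ < ‖rn t‖ := by
    intro t ht
    have h1 := hfirst t ht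
    rw [hthr] at h1
    rw [hrn t]
    exact lt_of_not_ge h1
  -- splitting of the inner product
  have hinsplit : ∀ t, (⟪lams n t ω, A (xs n t ω) - y⟫ : ℝ)
      = ⟪lams n t ω, rn t⟫ + ⟪lams n t ω, b - y⟫ := by
    intro t
    rw [hrn t, ← inner_add_right]
    congr 1
    abel
  -- the value of aa
  set aa : ℝ := γ * (1 / 4 + c) with haa_def
  clear_value aa
  have haaγ : γ / 4 ≤ aa := by
    rw [haa_def]
    nlinarith only [mul_pos hγ0 hc0]
  have haa0 : 0 < aa := lt_of_lt_of_le (by linarith only [hγ0]) haaγ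
  -- noisy one-step descent of the exact-data dual value
  have hGdes : ∀ t, Gf (t + 1) ≤ Gf t - aa * ‖rn t‖ ^ 2 + γ * E ^ 2 := by
    intro t
    have h1 := hdes0 t
    rw [← hrn t] at h1
    have h2 : (⟪lams n (t + 1) ω, b - y⟫ : ℝ)
        = ⟪lams n t ω, b - y⟫ - γ * ⟪rn t, b - y⟫ := by
      rw [hup t, ← hrn t, inner_sub_left, real_inner_smul_left]
    have h3 : |(⟪rn t, b - y⟫ : ℝ)| ≤ ‖rn t‖ * E := by
      have h3' := abs_real_inner_le_norm (rn t) (b - y)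
      rwa [← hE_def2] at h3'
    have h4 : γ * (-(⟪rn t, b - y⟫ : ℝ)) ≤ γ * (‖rn t‖ * E) :=
      mul_le_mul_of_nonneg_left (by linarith only [(abs_le.1 h3).1]) hγ0.le
    have h5 : ‖rn t‖ * E ≤ ‖rn t‖ ^ 2 / 4 + E ^ 2 := by
      nlinarith only [sq_nonneg (‖rn t‖ / 2 - E)]
    have h6 : γ * (‖rn t‖ * E) ≤ γ * (‖rn t‖ ^ 2 / 4 + E ^ 2) :=
      mul_le_mul_of_nonneg_left h5 hγ0.le
    have haaeq : aa * ‖rn t‖ ^ 2 = γ * (1 / 2 + c) * ‖rn t‖ ^ 2 - γ / 4 * ‖rn t‖ ^ 2 := by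
      rw [haa_def]; ring
    have hr2 : (⟪lams n (t + 1) ω, A (xs n (t + 1) ω) - b⟫ : ℝ)
        - (R (xs n (t + 1) ω)).toReal
        ≤ ⟪lams n t ω, rn t⟫ - (R (xs n t ω)).toReal - γ * (1 / 2 + c) * ‖rn t‖ ^ 2 := h1
    rw [hGft t, hGft (t + 1), hinsplit t, hinsplit (t + 1), h2]
    have hre : (⟪lams n (t + 1) ω, rn (t + 1)⟫ : ℝ)
        = ⟪lams n (t + 1) ω, A (xs n (t + 1) ω) - b⟫ := by rw [hrn]
    rw [hre]
    linarith only [hr2, h4, h6, haaeq]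
  -- telescoped descent
  have tele : ∀ t₀ m, t₀ ≤ m →
      Gf m + aa * (∑ t ∈ Finset.Ico t₀ m, ‖rn t‖ ^ 2)
        ≤ Gf t₀ + ((m - t₀ : ℕ) : ℝ) * (γ * E ^ 2) := by
    intro t₀ m hm
    induction m, hm using Nat.le_induction with
    | base => simp
    | succ m hm ih =>
      have h1 := hGdes m
      rw [Finset.sum_Ico_succ_top hm]
      have hcast : ((m + 1 - t₀ : ℕ) : ℝ) = ((m - t₀ : ℕ) : ℝ) + 1 := by
        rw [Nat.succ_sub hm]
        push_cast
        ring
      rw [hcast]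
      linarith only [h1, ih]
  have hG0 : Gf 0 ≤ 0 := by
    rw [hGft 0, hlam0, inner_zero_left]
    have := ENNReal.toReal_nonneg (a := R (xs n 0 ω))
    linarith only [this]
  have hGlow : ∀ t, -D ≤ Gf t := by
    intro t
    rw [hGft t]
    exact hlow n t ω
  have hsum : ∀ m, aa * (∑ t ∈ Finset.range m, ‖rn t‖ ^ 2)
      ≤ D + (m : ℝ) * (γ * E ^ 2) := by
    intro m
    have h1 := tele 0 m (Nat.zero_le m)
    rw [← Finset.range_eq_Ico] at h1
    simp only [Nat.sub_zero] at h1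
    linarith only [h1, hGlow m, hG0]
  -- a generic division helper
  have hdiv4 : ∀ x B : ℝ, 0 ≤ x → γ / 4 * x ≤ B → x ≤ B * (4 / γ) := by
    intro x B hx h
    have h8 : x = γ / 4 * x * (4 / γ) := by field_simp
    rw [h8]
    exact mul_le_mul_of_nonneg_right h (div_pos four_pos hγ0).le
  have hE2le1 : E ^ 2 ≤ 1 := by nlinarith only [hE1, hE0]
  -- bound on the residuals over the initial segment
  have hrle : ∀ t, t < t₁ → ‖rn t‖ ≤ ρ := by
    intro t ht
    have h1 : ‖rn t‖ ^ 2 ≤ ∑ t' ∈ Finset.range t₁, ‖rn t'‖ ^ 2 :=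
      Finset.single_le_sum (f := fun t' => ‖rn t'‖ ^ 2) (fun i _ => sq_nonneg _)
        (Finset.mem_range.2 ht)
    have h2 := hsum t₁
    have h7 : (t₁ : ℝ) * (γ * E ^ 2) ≤ (t₁ : ℝ) * γ := by
      have := mul_le_mul_of_nonneg_left hE2le1 hγ0.le
      have h9 := mul_le_mul_of_nonneg_left this (le_of_lt ht₁R)
      calc (t₁ : ℝ) * (γ * E ^ 2) ≤ (t₁ : ℝ) * (γ * 1) := h9
      _ = (t₁ : ℝ) * γ := by ring
    have h5 : γ / 4 * ‖rn t‖ ^ 2 ≤ aa * ‖rn t‖ ^ 2 :=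
      mul_le_mul_of_nonneg_right haaγ (sq_nonneg _)
    have h6 : aa * ‖rn t‖ ^ 2 ≤ aa * ∑ t' ∈ Finset.range t₁, ‖rn t'‖ ^ 2 :=
      mul_le_mul_of_nonneg_left h1 haa0.le
    have h4 : ‖rn t‖ ^ 2 ≤ (D + (t₁ : ℝ) * γ) * (4 / γ) := by
      apply hdiv4 _ _ (sq_nonneg _)
      linarith only [h5, h6, h2, h7]
    have h10 := Real.sqrt_le_sqrt h4
    rwa [Real.sqrt_sq (norm_nonneg _), ← hρ_def] at h10
  -- bound on the multipliers over the initial segment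
  have hlamle : ∀ t, t ≤ t₁ → ‖lams n t ω‖ ≤ γ * (t : ℝ) * ρ := by
    intro t
    induction t with
    | zero => intro _; rw [hlam0]; simp
    | succ t ihh =>
      intro ht
      have ht' : t ≤ t₁ := le_trans (Nat.le_succ t) ht
      have htlt : t < t₁ := lt_of_lt_of_le (Nat.lt_succ_self t) ht
      have h1 := ihh ht'
      have h2 : ‖lams n (t + 1) ω‖ ≤ ‖lams n t ω‖ + γ * ‖rn t‖ := by
        rw [hup t, ← hrn t]
        calc ‖lams n t ω - γ • rn t‖ ≤ ‖lams n t ω‖ + ‖γ • rn t‖ := norm_sub_le _ _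
        _ = ‖lams n t ω‖ + γ * ‖rn t‖ := by
            rw [norm_smul, Real.norm_eq_abs, abs_of_pos hγ0]
      have h3 := hrle t htlt
      have hcast : ((t + 1 : ℕ) : ℝ) = (t : ℝ) + 1 := by push_cast; ring
      rw [hcast]
      nlinarith only [h1, h2, h3, hγ0]
  have hlamΛ : ∀ t, t < t₁ → ‖lams n t ω‖ ≤ Λ₁ := by
    intro t ht
    have h1 := hlamle t ht.le
    have h2 : (t : ℝ) ≤ (t₁ : ℝ) := by exact_mod_cast ht.le
    rw [hΛ_def]
    have h3 := mul_le_mul_of_nonneg_left (mul_le_mul_of_nonneg_right h2 hρ0) hγ0.le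
    linarith only [h1, h3]
  -- the witness value
  set Hw : ℝ := ⟪lams nw tw ωw, A (xs nw tw ωw) - y⟫ - (R (xs nw tw ωw)).toReal
    with hHw_def
  clear_value Hw
  -- anchor inequality: optimality of the witness pair against the trajectory point
  have hanchor : ∀ t, (⟪lams nw tw ωw, rn t⟫ : ℝ) - (R (xs n t ω)).toReal
      ≤ Hw - ⟪lams nw tw ωw, b - y⟫ := by
    intro t
    have h1 := opt nw tw ωw (xs n t ω) (hmins n t ω).1
    have hvec : rn t = (A (xs n t ω) - A (xs nw tw ωw))
        + ((A (xs nw tw ωw) - y) - (b - y)) := by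
      rw [hrn t]; abel
    have h2 : (⟪lams nw tw ωw, rn t⟫ : ℝ)
        = ⟪lams nw tw ωw, A (xs n t ω) - A (xs nw tw ωw)⟫
          + (⟪lams nw tw ωw, A (xs nw tw ωw) - y⟫ - ⟪lams nw tw ωw, b - y⟫) := by
      rw [hvec]
      simp only [inner_add_right, inner_sub_right]
    rw [hHw_def]
    linarith only [h1, h2]
  -- Fejér-type recursion with the witness as anchor
  have hPrec : ∀ t, ‖lams n (t + 1) ω - lams nw tw ωw‖ ^ 2
      = ‖lams n t ω - lams nw tw ωw‖ ^ 2
        - 2 * γ * ⟪lams n t ω - lams nw tw ωw, rn t⟫ + γ ^ 2 * ‖rn t‖ ^ 2 := by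
    intro t
    have h0 : lams n (t + 1) ω - lams nw tw ωw
        = (lams n t ω - lams nw tw ωw) - γ • rn t := by
      rw [hup t, ← hrn t]; abel
    rw [h0, norm_sub_sq_real, real_inner_smul_right, norm_smul, Real.norm_eq_abs,
      abs_of_pos hγ0, mul_pow]
    ring
  -- convexity-type inequality
  have hconv : ∀ t, t < t₁ →
      Gf t - Hw - (Λ₁ + K) * E ≤ ⟪lams n t ω - lams nw tw ωw, rn t⟫ := by
    intro t ht
    have h1 := hanchor t
    have h2 : Gf t = ⟪lams n t ω, rn t⟫ + ⟪lams n t ω, b - y⟫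
        - (R (xs n t ω)).toReal := by
      rw [hGft t, hinsplit t]
    have h3 : |(⟪lams n t ω, b - y⟫ : ℝ)| ≤ Λ₁ * E := by
      have h3' := abs_real_inner_le_norm (lams n t ω) (b - y)
      have h3'' := mul_le_mul_of_nonneg_right (hlamΛ t ht) (norm_nonneg (b - y))
      rw [← hE_def2] at h3' h3''
      linarith only [h3', h3'']
    have h4 : |(⟪lams nw tw ωw, b - y⟫ : ℝ)| ≤ K * E := by
      have h4' := abs_real_inner_le_norm (lams nw tw ωw) (b - y)
      rw [← hE_def2, ← hK_def] at h4'
      exact h4'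
    rw [inner_sub_left]
    linarith only [h1, h2, (abs_le.1 h3).1, (abs_le.1 h3).2, (abs_le.1 h4).1,
      (abs_le.1 h4).2]
  -- telescoped Fejér inequality
  have hfej : ∀ m, m ≤ t₁ →
      2 * γ * (∑ t ∈ Finset.range m, (Gf t - Hw))
        ≤ K ^ 2 - ‖lams n m ω - lams nw tw ωw‖ ^ 2
          + γ ^ 2 * (∑ t ∈ Finset.range m, ‖rn t‖ ^ 2)
          + (m : ℝ) * (2 * γ * ((Λ₁ + K) * E)) := by
    intro m
    induction m with
    | zero =>
      intro _
      simp only [Finset.range_zero, Finset.sum_empty]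
      rw [hlam0, zero_sub, norm_neg, ← hK_def]
      push_cast
      norm_num
    | succ m ihh =>
      intro hm
      have hm' : m ≤ t₁ := le_trans (Nat.le_succ m) hm
      have hmlt : m < t₁ := lt_of_lt_of_le (Nat.lt_succ_self m) hm
      have h1 := ihh hm'
      have h2 := hPrec m
      have h3 := mul_le_mul_of_nonneg_left (hconv m hmlt)
        (by linarith only [hγ0] : (0:ℝ) ≤ 2 * γ)
      rw [Finset.sum_range_succ, Finset.sum_range_succ]
      have hcast : ((m + 1 : ℕ) : ℝ) = (m : ℝ) + 1 := by push_cast; ring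
      rw [hcast]
      linarith only [h1, h2, h3]
  -- bound on the total residual sum over the initial segment
  have hSr : (∑ t ∈ Finset.range t₁, ‖rn t‖ ^ 2)
      ≤ (D + (t₁ : ℝ) * (γ * E ^ 2)) * (4 / γ) := by
    apply hdiv4 _ _ (Finset.sum_nonneg fun i _ => sq_nonneg _)
    have h5 : γ / 4 * (∑ t ∈ Finset.range t₁, ‖rn t‖ ^ 2)
        ≤ aa * (∑ t ∈ Finset.range t₁, ‖rn t‖ ^ 2) :=
      mul_le_mul_of_nonneg_right haaγ (Finset.sum_nonneg fun i _ => sq_nonneg _)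
    linarith only [h5, hsum t₁]
  -- existence of a good index t' < t₁
  set β : ℝ := (K ^ 2 + γ ^ 2 * ((D + (t₁ : ℝ) * (γ * E ^ 2)) * (4 / γ))
      + (t₁ : ℝ) * (2 * γ * ((Λ₁ + K) * E))) / (2 * γ * (t₁ : ℝ)) with hβ_def
  clear_value β
  have ht₁ne : (t₁ : ℝ) ≠ 0 := ne_of_gt ht₁R
  have hden : (0:ℝ) < 2 * γ * (t₁ : ℝ) := mul_pos (mul_pos two_pos hγ0) ht₁R
  have hβnum0 : 0 ≤ K ^ 2 + γ ^ 2 * ((D + (t₁ : ℝ) * (γ * E ^ 2)) * (4 / γ))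
      + (t₁ : ℝ) * (2 * γ * ((Λ₁ + K) * E)) := by
    have n0 : (0:ℝ) ≤ (t₁ : ℝ) * (γ * E ^ 2) :=
      mul_nonneg ht₁R.le (mul_nonneg hγ0.le (sq_nonneg E))
    have n1 : (0:ℝ) ≤ γ ^ 2 * ((D + (t₁ : ℝ) * (γ * E ^ 2)) * (4 / γ)) := by
      apply mul_nonneg (sq_nonneg _)
      apply mul_nonneg (by linarith only [hD0, n0])
      exact (div_pos four_pos hγ0).le
    have n2 : (0:ℝ) ≤ (t₁ : ℝ) * (2 * γ * ((Λ₁ + K) * E)) := by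
      apply mul_nonneg ht₁R.le
      apply mul_nonneg (by linarith only [hγ0])
      exact mul_nonneg (by linarith only [hΛ0, hK0]) hE0
    have n3 : (0:ℝ) ≤ K ^ 2 := sq_nonneg K
    linarith only [n1, n2, n3]
  have hβ0 : 0 ≤ β := by
    rw [hβ_def]
    exact div_nonneg hβnum0 hden.le
  have hβmul : β * (2 * γ * (t₁ : ℝ)) = K ^ 2
      + γ ^ 2 * ((D + (t₁ : ℝ) * (γ * E ^ 2)) * (4 / γ))
      + (t₁ : ℝ) * (2 * γ * ((Λ₁ + K) * E)) := by
    rw [hβ_def]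
    exact div_mul_cancel₀ _ (ne_of_gt hden)
  have hminex : ∃ t', t' < t₁ ∧ Gf t' - Hw ≤ β := by
    by_contra hcon
    push_neg at hcon
    have h1 : ∑ t ∈ Finset.range t₁, β < ∑ t ∈ Finset.range t₁, (Gf t - Hw) := by
      apply Finset.sum_lt_sum_of_nonempty (Finset.nonempty_range_iff.2 (Nat.pos_iff_ne_zero.mp ht₁pos))
      intro i hi
      exact hcon i (Finset.mem_range.1 hi)
    rw [Finset.sum_const, Finset.card_range, nsmul_eq_mul] at h1
    have h2 := hfej t₁ le_rfl
    have h3 := mul_le_mul_of_nonneg_left hSr (sq_nonneg γ)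
    have h5 : 2 * γ * ((t₁ : ℝ) * β) < 2 * γ * (∑ t ∈ Finset.range t₁, (Gf t - Hw)) :=
      mul_lt_mul_of_pos_left h1 (by linarith only [hγ0])
    linarith only [h5, h2, h3, hβmul, sq_nonneg ‖lams n t₁ ω - lams nw tw ωw‖]
  obtain ⟨t', ht'lt, ht'le⟩ := hminex
  -- the key bound on T δ²
  have hkey : (T : ℝ) * δ ^ 2 ≤ (t₁ : ℝ) * δ ^ 2 + (4 / γ) * (β + ε₃) := by
    have hβε0 : 0 ≤ β + ε₃ := by linarith only [hβ0, hε₃0]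
    rcases le_or_gt T t' with hTt | htT
    · have h1 : (T : ℝ) ≤ (t₁ : ℝ) := by exact_mod_cast le_trans hTt ht'lt.le
      have h2 : (T : ℝ) * δ ^ 2 ≤ (t₁ : ℝ) * δ ^ 2 :=
        mul_le_mul_of_nonneg_right h1 (sq_nonneg δ)
      have h3 : (0:ℝ) ≤ (4 / γ) * (β + ε₃) := mul_nonneg (div_pos four_pos hγ0).le hβε0
      linarith only [h2, h3]
    · have htel := tele t' T htT.le
      have hcard : ∀ t ∈ Finset.Ico t' T, δ ^ 2 ≤ ‖rn t‖ ^ 2 := by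
        intro t htmem
        exact pow_le_pow_left₀ hδ0 (hdisc t (Finset.mem_Ico.1 htmem).2).le 2
      have hsumlow : ((T - t' : ℕ) : ℝ) * δ ^ 2 ≤ ∑ t ∈ Finset.Ico t' T, ‖rn t‖ ^ 2 := by
        have h1 := Finset.card_nsmul_le_sum (Finset.Ico t' T) (fun t => ‖rn t‖ ^ 2)
          (δ ^ 2) hcard
        rwa [Nat.card_Ico, nsmul_eq_mul] at h1
      have hGT : lstar ≤ Gf T := by rw [hGft T]; exact hmem n T ω
      have hc2 : γ * E ^ 2 ≤ γ * (c / 2 * δ ^ 2) := mul_le_mul_of_nonneg_left hEδ2 hγ0.le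
      have hmcast : ((T - t' : ℕ) : ℝ) = (T : ℝ) - (t' : ℝ) := by
        exact_mod_cast Nat.cast_sub htT.le
      have h5 : aa * (((T - t' : ℕ) : ℝ) * δ ^ 2)
          ≤ aa * ∑ t ∈ Finset.Ico t' T, ‖rn t‖ ^ 2 :=
        mul_le_mul_of_nonneg_left hsumlow haa0.le
      have h6 : Hw - ε₃ < Gf T := by linarith only [hGT, hHwlt]
      have h7 : ((T - t' : ℕ) : ℝ) * (γ * E ^ 2)
          ≤ ((T - t' : ℕ) : ℝ) * (γ * (c / 2 * δ ^ 2)) :=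
        mul_le_mul_of_nonneg_left hc2 (Nat.cast_nonneg _)
      have h8 : γ / 4 * (((T - t' : ℕ) : ℝ) * δ ^ 2)
          ≤ (aa - γ * (c / 2)) * (((T - t' : ℕ) : ℝ) * δ ^ 2) := by
        apply mul_le_mul_of_nonneg_right _ (mul_nonneg (Nat.cast_nonneg _) (sq_nonneg δ))
        rw [haa_def]
        nlinarith only [mul_pos hγ0 hc0]
      have h9 : γ / 4 * (((T - t' : ℕ) : ℝ) * δ ^ 2) ≤ β + ε₃ := by
        nlinarith only [htel, h5, h6, h7, ht'le, h8]
      have h10 : ((T - t' : ℕ) : ℝ) * δ ^ 2 ≤ (β + ε₃) * (4 / γ) :=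
        hdiv4 _ _ (mul_nonneg (Nat.cast_nonneg _) (sq_nonneg δ)) h9
      have h11 : (t' : ℝ) ≤ (t₁ : ℝ) := by exact_mod_cast ht'lt.le
      have h12 : (t' : ℝ) * δ ^ 2 ≤ (t₁ : ℝ) * δ ^ 2 :=
        mul_le_mul_of_nonneg_right h11 (sq_nonneg δ)
      have h13 : (T : ℝ) * δ ^ 2 = ((T - t' : ℕ) : ℝ) * δ ^ 2 + (t' : ℝ) * δ ^ 2 := by
        rw [hmcast]; ring
      nlinarith only [h10, h12, h13]
  -- final numerics
  have hφδ : (σ * τ n / (2 * Real.sqrt n)) ^ 2 ≤ δ ^ 2 := by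
    have h1 : σ * τ n / (2 * Real.sqrt n) = σ / 2 * u := by rw [hu_def]; ring
    rw [h1, hδ_def]
    have h2 : 0 ≤ σ / 2 * u := mul_nonneg (by linarith only [hσ0]) hu0.le
    have h3 : σ / 2 * u ≤ s * u := mul_le_mul_of_nonneg_right hsl hu0.le
    exact pow_le_pow_left₀ h2 h3 2
  have hTφ : (T : ℝ) * (σ * τ n / (2 * Real.sqrt n)) ^ 2 ≤ (T : ℝ) * δ ^ 2 :=
    mul_le_mul_of_nonneg_left hφδ (Nat.cast_nonneg T)
  have ht₁δ : (t₁ : ℝ) * δ ^ 2 ≤ ε / 4 := by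
    have h1 : s ^ 2 ≤ (3 / 2 * σ) ^ 2 := pow_le_pow_left₀ hs0 hsu 2
    have h2 : δ ^ 2 ≤ (3 / 2 * σ) ^ 2 * u ^ 2 := by
      rw [hδsq]; exact mul_le_mul_of_nonneg_right h1 (sq_nonneg u)
    have h3 : (t₁ : ℝ) * δ ^ 2 ≤ (t₁ : ℝ) * ((3 / 2 * σ) ^ 2 * u ^ 2) :=
      mul_le_mul_of_nonneg_left h2 ht₁R.le
    linarith only [h3, hu2]
  have hε₃4 : (4 / γ) * ε₃ = ε / 4 := by
    rw [hε₃_def]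
    field_simp
    ring
  have hβ4 : (4 / γ) * β ≤ ε / 4 + ε / 4 := by
    have hexp : (4 / γ) * β = (4 / γ) * (K ^ 2 / (2 * γ) + 2 * D) / (t₁ : ℝ)
        + 8 * E ^ 2 + (4 / γ) * ((Λ₁ + K) * E) := by
      rw [hβ_def]
      field_simp
      ring
    have hW : (0:ℝ) < 2 * γ + Λ₁ + K := by linarith only [hγ0, hΛ0, hK0]
    have hEW : E * (2 * γ + Λ₁ + K) ≤ ε * γ / 16 := by
      have h1 : E ≤ ε * γ / (16 * (2 * γ + Λ₁ + K)) := le_trans hEη hη₀2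
      have h2 := mul_le_mul_of_nonneg_right h1 hW.le
      have h3 : ε * γ / (16 * (2 * γ + Λ₁ + K)) * (2 * γ + Λ₁ + K) = ε * γ / 16 := by
        rw [div_mul_eq_mul_div, mul_comm (16:ℝ) (2 * γ + Λ₁ + K),
          ← div_div, mul_div_assoc]
        rw [div_self (ne_of_gt hW)]
        ring
      rwa [h3] at h2
    have h4 : 8 * E ^ 2 + (4 / γ) * ((Λ₁ + K) * E) ≤ ε / 4 := by
      have h5 : 8 * E ^ 2 ≤ 8 * E := by nlinarith only [hE1, hE0]
      have h6 : (4 / γ) * (E * (2 * γ + Λ₁ + K)) ≤ (4 / γ) * (ε * γ / 16) :=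
        mul_le_mul_of_nonneg_left hEW (div_pos four_pos hγ0).le
      have h7 : (4 / γ) * (ε * γ / 16) = ε / 4 := by
        field_simp
        ring
      have h8 : (4 / γ) * (E * (2 * γ + Λ₁ + K)) = 8 * E + (4 / γ) * ((Λ₁ + K) * E) := by
        field_simp
        ring
      linarith only [h5, h6, h7, h8]
    linarith only [hexp, ht₁main, h4]
  have hfin : (T : ℝ) * δ ^ 2 ≤ ε := by
    have h1 : (4 / γ) * (β + ε₃) = (4 / γ) * β + (4 / γ) * ε₃ := by ring
    linarith only [hkey, ht₁δ, hε₃4, hβ4, h1]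
  exact le_trans hTφ hfin
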